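/- arXiv:0811.3011 — 3 statements merged into one kernel-verified Lean document; each statement's English description precedes it below -/
import Mathlib

section
/- Let n ≥ 1 and let f, g : ℝⁿ → ℂ be measurable. Then ∫_{ℝⁿ} |f(x)|·|g(x)| dx ≤ ( sup_{R>0} (1/R) ∫_{|x|≤R} |g|² dx )^{1/2} · Σ_{j∈ℤ} ( 2^{j+1} ∫_{C(j)} |f|² dx )^{1/2}, i.e. ∫ |f g| dx ≤ |||g||| · N(f). -/
open MeasureTheory Metric Real Set
open scoped ENNReal

noncomputable section

abbrev Euc (n : ℕ) := EuclideanSpace ℝ (Fin n)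

/-- Dyadic shell `C(j) = {2^j ≤ |x| ≤ 2^{j+1}}`. -/
def shell (n : ℕ) (j : ℤ) : Set (Euc n) := {x | (2 : ℝ) ^ j ≤ ‖x‖ ∧ ‖x‖ ≤ (2 : ℝ) ^ (j + 1)}

/-- `N(f) = Σ_{j∈ℤ} (2^{j+1} ∫_{C(j)} |f|²)^{1/2}` (with values in `ℝ≥0∞`). -/
def NnormE {n : ℕ} (f : Euc n → ℂ) : ℝ≥0∞ :=
  ∑' j : ℤ, (ENNReal.ofReal ((2 : ℝ) ^ (j + 1)) *
      ∫⁻ x in shell n j, (‖f x‖₊ : ℝ≥0∞) ^ 2) ^ (1/2 : ℝ)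

/-- Squared Morrey–Campanato norm `|||g|||² = sup_{R>0} (1/R)∫_{|x|≤R}|g|²`
(with values in `ℝ≥0∞`). -/
def morreySq {n : ℕ} (g : Euc n → ℂ) : ℝ≥0∞ :=
  ⨆ (R : ℝ) (_ : 0 < R),
    (ENNReal.ofReal R)⁻¹ * ∫⁻ x in Metric.closedBall (0 : Euc n) R, (‖g x‖₊ : ℝ≥0∞) ^ 2

/-- Surface integral over the sphere `{|x| = R}`: via polar coordinates,
`∫_{|x|=R} g dσ = R^{n-1} ∫_{ω ∈ S^{n-1}} g(Rω) dσ₁(ω)` where `σ₁ = volume.toSphere`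
is the surface measure of the unit sphere. -/
def sphereLIntegral (n : ℕ) (R : ℝ) (g : Euc n → ℝ≥0∞) : ℝ≥0∞ :=
  ENNReal.ofReal (R ^ (n - 1)) * ∫⁻ ω : Metric.sphere (0 : Euc n) 1, g (R • (ω : Euc n))
    ∂((volume : Measure (Euc n)).toSphere)

/-- `sup_{R>0} (1/R²) ∫_{|x|=R} |u|² dσ` (with values in `ℝ≥0∞`). -/
def sphereSup {n : ℕ} (u : Euc n → ℂ) : ℝ≥0∞ :=
  ⨆ (R : ℝ) (_ : 0 < R),
    (ENNReal.ofReal (R ^ 2))⁻¹ * sphereLIntegral n R (fun x => (‖u x‖₊ : ℝ≥0∞) ^ 2)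

/-- **Duality between `N` and the Morrey–Campanato norm**:
`∫ |f g| ≤ |||g||| · N(f)`. -/
theorem morrey_duality
    (n : ℕ) (hn : 1 ≤ n) (f g : Euc n → ℂ) (hf : Measurable f) (hg : Measurable g) :
    ∫⁻ x, (‖f x‖₊ : ℝ≥0∞) * (‖g x‖₊ : ℝ≥0∞)
      ≤ (morreySq g) ^ (1/2 : ℝ) * NnormE f := by
  set M := (morreySq g) ^ (1/2 : ℝ) with hM
  haveI hnt : Nontrivial (Euc n) := by
    have hpos : 0 < n := hn
    refine ⟨EuclideanSpace.single ⟨0, hpos⟩ 1, 0, fun h => ?_⟩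
    have := congrArg (fun v : Euc n => v ⟨0, hpos⟩) h
    simp [EuclideanSpace.single_apply] at this
  have h0 : (volume : Measure (Euc n)) {0} = 0 := measure_singleton 0
  -- step 1: reduce to shells
  have hcover : ({0}ᶜ : Set (Euc n)) ⊆ ⋃ j : ℤ, shell n j := by
    intro x hx
    have hx0 : (0:ℝ) < ‖x‖ := norm_pos_iff.2 hx
    refine mem_iUnion.2 ⟨Int.log 2 ‖x‖, ?_, ?_⟩
    · exact_mod_cast Int.zpow_log_le_self (by norm_num) hx0
    · exact_mod_cast le_of_lt (Int.lt_zpow_succ_log_self (by norm_num) ‖x‖)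
  have step1 : ∫⁻ x, (‖f x‖₊ : ℝ≥0∞) * (‖g x‖₊ : ℝ≥0∞)
      ≤ ∑' j : ℤ, ∫⁻ x in shell n j, (‖f x‖₊ : ℝ≥0∞) * (‖g x‖₊ : ℝ≥0∞) := by
    have : ∫⁻ x, (‖f x‖₊ : ℝ≥0∞) * (‖g x‖₊ : ℝ≥0∞)
        = ∫⁻ x in ({0}ᶜ : Set (Euc n)), (‖f x‖₊ : ℝ≥0∞) * (‖g x‖₊ : ℝ≥0∞) := by
      rw [← lintegral_add_compl (fun x => (‖f x‖₊ : ℝ≥0∞) * (‖g x‖₊ : ℝ≥0∞))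
        (measurableSet_singleton (0 : Euc n))]
      rw [setLIntegral_measure_zero _ _ h0, zero_add]
    rw [this]
    calc _ ≤ ∫⁻ x in ⋃ j : ℤ, shell n j, (‖f x‖₊ : ℝ≥0∞) * (‖g x‖₊ : ℝ≥0∞) :=
          lintegral_mono_set hcover
      _ ≤ _ := lintegral_iUnion_le _ _
  -- per shell
  have key : ∀ j : ℤ, ∫⁻ x in shell n j, (‖f x‖₊ : ℝ≥0∞) * (‖g x‖₊ : ℝ≥0∞)
      ≤ M * (ENNReal.ofReal ((2 : ℝ) ^ (j + 1)) *
          ∫⁻ x in shell n j, (‖f x‖₊ : ℝ≥0∞) ^ 2) ^ (1/2 : ℝ) := by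
    intro j
    set R : ℝ := (2 : ℝ) ^ (j + 1) with hRdef
    have hR : 0 < R := zpow_pos (by norm_num) _
    set μ := (volume : Measure (Euc n)).restrict (shell n j)
    have hCS : ∫⁻ x, (‖f x‖₊ : ℝ≥0∞) * (‖g x‖₊ : ℝ≥0∞) ∂μ
        ≤ (∫⁻ x, (‖f x‖₊ : ℝ≥0∞) ^ (2:ℝ) ∂μ) ^ (1/2 : ℝ)
          * (∫⁻ x, (‖g x‖₊ : ℝ≥0∞) ^ (2:ℝ) ∂μ) ^ (1/2 : ℝ) :=
      ENNReal.lintegral_mul_le_Lp_mul_Lq μ (Real.holderConjugate_iff_eq_conjExponent (by norm_num) |>.2 (by norm_num))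
        (hf.nnnorm.coe_nnreal_ennreal.aemeasurable)
        (hg.nnnorm.coe_nnreal_ennreal.aemeasurable)
    have hrw : ∀ (u : Euc n → ℂ), (∫⁻ x, (‖u x‖₊ : ℝ≥0∞) ^ (2:ℝ) ∂μ)
        = ∫⁻ x, (‖u x‖₊ : ℝ≥0∞) ^ 2 ∂μ := by
      intro u; congr 1; ext x
      rw [← ENNReal.rpow_natCast]; norm_num
    rw [hrw f, hrw g] at hCS
    -- bound g integral
    have hsub : shell n j ⊆ Metric.closedBall (0 : Euc n) R := by
      intro x hx
      simpa [Metric.mem_closedBall, dist_zero_right] using hx.2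
    have hgb : (∫⁻ x, (‖g x‖₊ : ℝ≥0∞) ^ 2 ∂μ) ≤ ENNReal.ofReal R * morreySq g := by
      have h1 : (∫⁻ x, (‖g x‖₊ : ℝ≥0∞) ^ 2 ∂μ)
          ≤ ∫⁻ x in Metric.closedBall (0 : Euc n) R, (‖g x‖₊ : ℝ≥0∞) ^ 2 :=
        lintegral_mono_set hsub
      have h2 : (ENNReal.ofReal R)⁻¹
            * ∫⁻ x in Metric.closedBall (0 : Euc n) R, (‖g x‖₊ : ℝ≥0∞) ^ 2 ≤ morreySq g := by
        rw [morreySq]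
        exact le_iSup₂ (f := fun (R : ℝ) (_ : 0 < R) => (ENNReal.ofReal R)⁻¹
          * ∫⁻ x in Metric.closedBall (0 : Euc n) R, (‖g x‖₊ : ℝ≥0∞) ^ 2) R hR
      have hne : ENNReal.ofReal R ≠ 0 := by simp [ENNReal.ofReal_eq_zero, not_le, hR]
      calc (∫⁻ x, (‖g x‖₊ : ℝ≥0∞) ^ 2 ∂μ)
          ≤ ∫⁻ x in Metric.closedBall (0 : Euc n) R, (‖g x‖₊ : ℝ≥0∞) ^ 2 := h1
        _ = ENNReal.ofReal R * ((ENNReal.ofReal R)⁻¹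
              * ∫⁻ x in Metric.closedBall (0 : Euc n) R, (‖g x‖₊ : ℝ≥0∞) ^ 2) := by
            rw [← mul_assoc, ENNReal.mul_inv_cancel hne ENNReal.ofReal_ne_top, one_mul]
        _ ≤ ENNReal.ofReal R * morreySq g := mul_le_mul_right h2 _
    calc ∫⁻ x, (‖f x‖₊ : ℝ≥0∞) * (‖g x‖₊ : ℝ≥0∞) ∂μ
        ≤ (∫⁻ x, (‖f x‖₊ : ℝ≥0∞) ^ 2 ∂μ) ^ (1/2 : ℝ)
          * (∫⁻ x, (‖g x‖₊ : ℝ≥0∞) ^ 2 ∂μ) ^ (1/2 : ℝ) := hCS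
      _ ≤ (∫⁻ x, (‖f x‖₊ : ℝ≥0∞) ^ 2 ∂μ) ^ (1/2 : ℝ)
          * (ENNReal.ofReal R * morreySq g) ^ (1/2 : ℝ) :=
          mul_le_mul_right (ENNReal.rpow_le_rpow hgb (by norm_num)) _
      _ = M * (ENNReal.ofReal R * ∫⁻ x, (‖f x‖₊ : ℝ≥0∞) ^ 2 ∂μ) ^ (1/2 : ℝ) := by
          rw [ENNReal.mul_rpow_of_nonneg _ _ (by norm_num : (0:ℝ) ≤ 1/2),
              ENNReal.mul_rpow_of_nonneg _ _ (by norm_num : (0:ℝ) ≤ 1/2), hM]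
          ring
  calc ∫⁻ x, (‖f x‖₊ : ℝ≥0∞) * (‖g x‖₊ : ℝ≥0∞)
      ≤ ∑' j : ℤ, ∫⁻ x in shell n j, (‖f x‖₊ : ℝ≥0∞) * (‖g x‖₊ : ℝ≥0∞) := step1
    _ ≤ ∑' j : ℤ, M * (ENNReal.ofReal ((2 : ℝ) ^ (j + 1)) *
          ∫⁻ x in shell n j, (‖f x‖₊ : ℝ≥0∞) ^ 2) ^ (1/2 : ℝ) := ENNReal.tsum_le_tsum key
    _ = M * NnormE f := by rw [ENNReal.tsum_mul_left, NnormE]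
end
end

section
/- Let n ≥ 2, let f : ℝⁿ → ℂ be measurable and let u : ℝⁿ → ℂ be continuous. Then ∫_{ℝⁿ} |f(x)|·|u(x)|/|x| dx ≤ ( sup_{R>0} (1/R²) ∫_{|x|=R} |u|² dσ )^{1/2} · N(f), where dσ is the surface measure on the sphere {|x| = R}. -/
open MeasureTheory Metric Real Set
open scoped ENNReal

noncomputable section

/-! ### Auxiliary lemmas -/

/-- Polar coordinates for the Lebesgue integral of an `ℝ≥0∞`-valued function. -/
lemma polar_lintegral {n : ℕ} (hn : 1 ≤ n) (g : Euc n → ℝ≥0∞) (hg : Measurable g) :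
    ∫⁻ x, g x = ∫⁻ r in Set.Ioi (0:ℝ), sphereLIntegral n r g := by
  haveI : Nonempty (Fin n) := ⟨⟨0, by omega⟩⟩
  haveI : Nontrivial (Euc n) := inferInstance
  have hdim : Module.finrank ℝ (Euc n) = n := finrank_euclideanSpace_fin
  set μ : Measure (Euc n) := volume with hμ
  have h0 : MeasurableSet ({0}ᶜ : Set (Euc n)) := (measurableSet_singleton _).compl
  have hFc : Measurable fun p : sphere (0 : Euc n) 1 × Ioi (0:ℝ) =>
      g ((p.2 : ℝ) • (p.1 : Euc n)) := by
    apply hg.comp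
    exact ((continuous_subtype_val.comp continuous_snd).smul
      (continuous_subtype_val.comp continuous_fst)).measurable
  calc ∫⁻ x, g x ∂μ = ∫⁻ x in ({0}ᶜ : Set (Euc n)), g x ∂μ := by
        rw [MeasureTheory.restrict_compl_singleton]
    _ = ∫⁻ x : ({0}ᶜ : Set (Euc n)), g x ∂(μ.comap (↑)) :=
        (lintegral_subtype_comap h0 g).symm
    _ = ∫⁻ p : sphere (0 : Euc n) 1 × Ioi (0:ℝ), g ((p.2 : ℝ) • (p.1 : Euc n))
          ∂(μ.toSphere.prod (Measure.volumeIoiPow (n - 1))) := by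
        have := μ.measurePreserving_homeomorphUnitSphereProd.lintegral_comp
          (f := fun p : sphere (0 : Euc n) 1 × Ioi (0:ℝ) => g ((p.2 : ℝ) • (p.1 : Euc n))) hFc
        rw [hdim] at this
        rw [← this]
        refine lintegral_congr fun a => ?_
        show g ↑a = g ((((homeomorphUnitSphereProd (Euc n)) a).2 : ℝ) •
          ((((homeomorphUnitSphereProd (Euc n)) a).1 : Euc n)))
        rw [← homeomorphUnitSphereProd_symm_apply_coe, Homeomorph.symm_apply_apply]
    _ = ∫⁻ r : Ioi (0:ℝ), ∫⁻ ω : sphere (0 : Euc n) 1, g ((r : ℝ) • (ω : Euc n)) ∂μ.toSphere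
          ∂(Measure.volumeIoiPow (n - 1)) :=
        lintegral_prod_symm _ hFc.aemeasurable
    _ = ∫⁻ r : Ioi (0:ℝ), ENNReal.ofReal ((r:ℝ) ^ (n - 1)) *
          ∫⁻ ω : sphere (0 : Euc n) 1, g ((r : ℝ) • (ω : Euc n)) ∂μ.toSphere
          ∂(Measure.comap Subtype.val volume) := by
        rw [Measure.volumeIoiPow]
        rw [lintegral_withDensity_eq_lintegral_mul _
          (by exact (measurable_subtype_coe.pow_const _).ennreal_ofReal)
          (Measurable.lintegral_prod_right' (f := fun p : Ioi (0:ℝ) × sphere (0 : Euc n) 1 =>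
            g ((p.1 : ℝ) • (p.2 : Euc n))) (hFc.comp measurable_swap))]
        rfl
    _ = ∫⁻ r in Ioi (0:ℝ), sphereLIntegral n r g := by
        rw [← lintegral_subtype_comap measurableSet_Ioi
          (fun r : ℝ => sphereLIntegral n r g)]
        rfl

lemma measurableSet_shell (n : ℕ) (j : ℤ) : MeasurableSet (shell n j) :=
  measurable_norm measurableSet_Icc

lemma shell_u_bound {n : ℕ} (hn : 1 ≤ n) (u : Euc n → ℂ) (hu : Continuous u) (j : ℤ) :
    ∫⁻ x in shell n j, (‖u x‖₊ : ℝ≥0∞)^2 * ((ENNReal.ofReal ‖x‖)⁻¹)^2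
      ≤ ENNReal.ofReal ((2:ℝ)^j) * sphereSup u := by
  set φ : Euc n → ℝ≥0∞ := fun x => (‖u x‖₊ : ℝ≥0∞)^2 * ((ENNReal.ofReal ‖x‖)⁻¹)^2 with hφ
  have hφm : Measurable φ :=
    ((hu.measurable.nnnorm.coe_nnreal_ennreal).pow_const 2).mul
      ((measurable_norm.ennreal_ofReal.inv).pow_const 2)
  have hs : MeasurableSet (shell n j) := measurableSet_shell n j
  set A : ℝ → ℝ≥0∞ := fun r =>
    (ENNReal.ofReal (r^2))⁻¹ * sphereLIntegral n r (fun x => (‖u x‖₊ : ℝ≥0∞)^2) with hA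
  have key : ∀ r ∈ Ioi (0:ℝ), sphereLIntegral n r ((shell n j).indicator φ)
      = (Icc ((2:ℝ)^j) ((2:ℝ)^(j+1))).indicator A r := by
    intro r hr
    have hr0 : (0:ℝ) < r := hr
    have hnorm : ∀ ω : sphere (0 : Euc n) 1, ‖r • (ω : Euc n)‖ = r := fun ω => by
      rw [norm_smul, mem_sphere_zero_iff_norm.1 ω.2, mul_one, Real.norm_eq_abs, abs_of_pos hr0]
    by_cases hmem : r ∈ Icc ((2:ℝ)^j) ((2:ℝ)^(j+1))
    · have hin : ∀ ω : sphere (0 : Euc n) 1, (r • (ω : Euc n)) ∈ shell n j := fun ω =>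
        ⟨by rw [hnorm ω]; exact hmem.1, by rw [hnorm ω]; exact hmem.2⟩
      rw [indicator_of_mem hmem]
      unfold sphereLIntegral
      have heq : ∀ ω : sphere (0 : Euc n) 1, (shell n j).indicator φ (r • (ω : Euc n))
          = (ENNReal.ofReal (r^2))⁻¹ * (‖u (r • (ω : Euc n))‖₊ : ℝ≥0∞)^2 := fun ω => by
        rw [indicator_of_mem (hin ω), hφ]
        simp only []
        rw [hnorm ω, mul_comm]
        congr 1
        rw [← ENNReal.inv_pow]
        congr 1
        rw [ENNReal.ofReal_pow hr0.le]
      have hmeas : Measurable fun ω : sphere (0 : Euc n) 1 =>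
          ((‖u (r • (ω : Euc n))‖₊ : ℝ≥0∞))^2 :=
        (((hu.comp (continuous_subtype_val.const_smul r)).measurable.nnnorm.coe_nnreal_ennreal
          ).pow_const 2)
      rw [lintegral_congr heq, lintegral_const_mul _ hmeas, hA]
      simp only [sphereLIntegral]
      ring
    · rw [indicator_of_notMem hmem]
      have heq : ∀ ω : sphere (0 : Euc n) 1, (shell n j).indicator φ (r • (ω : Euc n)) = 0 :=
        fun ω => indicator_of_notMem (fun hmm => hmem
          ⟨by rw [← hnorm ω]; exact hmm.1, by rw [← hnorm ω]; exact hmm.2⟩) φ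
      unfold sphereLIntegral
      rw [lintegral_congr heq, lintegral_zero, mul_zero]
  have hsub : Icc ((2:ℝ)^j) ((2:ℝ)^(j+1)) ⊆ Ioi (0:ℝ) := fun r hr =>
    lt_of_lt_of_le (zpow_pos two_pos j) hr.1
  calc ∫⁻ x in shell n j, φ x
      = ∫⁻ x, (shell n j).indicator φ x := (lintegral_indicator hs φ).symm
    _ = ∫⁻ r in Ioi (0:ℝ), sphereLIntegral n r ((shell n j).indicator φ) :=
        polar_lintegral hn _ (hφm.indicator hs)
    _ = ∫⁻ r in Ioi (0:ℝ), (Icc ((2:ℝ)^j) ((2:ℝ)^(j+1))).indicator A r :=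
        setLIntegral_congr_fun measurableSet_Ioi (fun r hr => key r hr)
    _ = ∫⁻ r in Icc ((2:ℝ)^j) ((2:ℝ)^(j+1)), A r := by
        rw [lintegral_indicator measurableSet_Icc,
          Measure.restrict_restrict measurableSet_Icc, inter_eq_left.2 hsub]
    _ ≤ ∫⁻ _ in Icc ((2:ℝ)^j) ((2:ℝ)^(j+1)), sphereSup u := by
        refine setLIntegral_mono' measurableSet_Icc fun r hr => ?_
        exact le_iSup₂ (f := fun (R : ℝ) (_ : 0 < R) =>
          (ENNReal.ofReal (R ^ 2))⁻¹ *
            sphereLIntegral n R (fun x => (‖u x‖₊ : ℝ≥0∞) ^ 2)) r (hsub hr)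
    _ = ENNReal.ofReal ((2:ℝ)^j) * sphereSup u := by
        rw [setLIntegral_const, Real.volume_Icc, mul_comm]
        congr 2
        rw [zpow_add_one₀ (two_ne_zero)]
        ring

theorem dyadic_shell_bound {n : ℕ} (hn : 1 ≤ n) (f : Euc n → ℂ) (u : Euc n → ℂ)
    (hf : Measurable f) (hu : Continuous u) (j : ℤ) :
    ∫⁻ x in shell n j, (‖f x‖₊ : ℝ≥0∞) * (‖u x‖₊ : ℝ≥0∞) * (ENNReal.ofReal ‖x‖)⁻¹
      ≤ (sphereSup u) ^ (1/2 : ℝ) *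
        (ENNReal.ofReal ((2 : ℝ) ^ (j + 1)) *
          ∫⁻ x in shell n j, (‖f x‖₊ : ℝ≥0∞) ^ 2) ^ (1/2 : ℝ) := by
  set a : Euc n → ℝ≥0∞ := fun x => (‖f x‖₊ : ℝ≥0∞) with ha
  set b : Euc n → ℝ≥0∞ := fun x => (‖u x‖₊ : ℝ≥0∞) * (ENNReal.ofReal ‖x‖)⁻¹ with hb
  have hpq : Real.HolderConjugate 2 2 := Real.HolderConjugate.two_two
  have ham : Measurable a := hf.nnnorm.coe_nnreal_ennreal
  have hbm : Measurable b :=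
    (hu.measurable.nnnorm.coe_nnreal_ennreal).mul (measurable_norm.ennreal_ofReal.inv)
  set μ := volume.restrict (shell n j) with hμ
  have holder := ENNReal.lintegral_mul_le_Lp_mul_Lq μ hpq ham.aemeasurable hbm.aemeasurable
  have hI2 : ∫⁻ x, a x ^ (2:ℝ) ∂μ = ∫⁻ x in shell n j, (‖f x‖₊ : ℝ≥0∞) ^ 2 := by
    refine lintegral_congr fun x => ?_
    rw [show (2:ℝ) = ((2:ℕ):ℝ) by norm_num, ENNReal.rpow_natCast]
  have hJ2 : ∫⁻ x, b x ^ (2:ℝ) ∂μ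
      = ∫⁻ x in shell n j, (‖u x‖₊ : ℝ≥0∞)^2 * ((ENNReal.ofReal ‖x‖)⁻¹)^2 := by
    refine lintegral_congr fun x => ?_
    rw [show (2:ℝ) = ((2:ℕ):ℝ) by norm_num, ENNReal.rpow_natCast, hb]
    exact mul_pow _ _ 2
  set I := ∫⁻ x in shell n j, (‖f x‖₊ : ℝ≥0∞) ^ 2 with hI
  calc ∫⁻ x in shell n j, (‖f x‖₊ : ℝ≥0∞) * (‖u x‖₊ : ℝ≥0∞) * (ENNReal.ofReal ‖x‖)⁻¹
      = ∫⁻ x, (a * b) x ∂μ := lintegral_congr fun x => mul_assoc _ _ _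
    _ ≤ (∫⁻ x, a x ^ (2:ℝ) ∂μ) ^ (1/2:ℝ) * (∫⁻ x, b x ^ (2:ℝ) ∂μ) ^ (1/2:ℝ) := holder
    _ ≤ I ^ (1/2:ℝ) * (ENNReal.ofReal ((2:ℝ)^j) * sphereSup u) ^ (1/2:ℝ) := by
        rw [hI2, hJ2]
        exact mul_le_mul_right
          (ENNReal.rpow_le_rpow (shell_u_bound hn u hu j) (by norm_num)) _
    _ = (sphereSup u) ^ (1/2:ℝ) * (ENNReal.ofReal ((2:ℝ)^j) * I) ^ (1/2:ℝ) := by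
        rw [ENNReal.mul_rpow_of_nonneg _ _ (by norm_num : (0:ℝ) ≤ 1/2),
          ENNReal.mul_rpow_of_nonneg _ _ (by norm_num : (0:ℝ) ≤ 1/2)]
        ring
    _ ≤ (sphereSup u) ^ (1/2:ℝ) * (ENNReal.ofReal ((2:ℝ)^(j+1)) * I) ^ (1/2:ℝ) := by
        refine mul_le_mul_right (ENNReal.rpow_le_rpow ?_ (by norm_num)) _
        exact mul_le_mul_left (ENNReal.ofReal_le_ofReal
          (zpow_le_zpow_right₀ one_le_two (by omega))) _

/-- **Estimate underlying (3.11)**: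
`∫ |f||u|/|x| dx ≤ (sup_{R>0} (1/R²)∫_{|x|=R}|u|²dσ)^{1/2} · N(f)`. -/
theorem dyadic_sphere_duality
    (n : ℕ) (hn : 2 ≤ n) (f : Euc n → ℂ) (u : Euc n → ℂ)
    (hf : Measurable f) (hu : Continuous u) :
    ∫⁻ x, (‖f x‖₊ : ℝ≥0∞) * (‖u x‖₊ : ℝ≥0∞) * (ENNReal.ofReal ‖x‖)⁻¹
      ≤ (sphereSup u) ^ (1/2 : ℝ) * NnormE f := by
  have h1n : 1 ≤ n := by omega
  haveI : Nonempty (Fin n) := ⟨⟨0, by omega⟩⟩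
  haveI : Nontrivial (Euc n) := inferInstance
  have hcover : ({0}ᶜ : Set (Euc n)) ⊆ ⋃ j : ℤ, shell n j := by
    intro x hx
    have hx0 : (0:ℝ) < ‖x‖ := norm_pos_iff.2 hx
    obtain ⟨j, hj⟩ := exists_mem_Ico_zpow hx0 (one_lt_two (α := ℝ))
    exact mem_iUnion.2 ⟨j, hj.1, hj.2.le⟩
  calc ∫⁻ x, (‖f x‖₊ : ℝ≥0∞) * (‖u x‖₊ : ℝ≥0∞) * (ENNReal.ofReal ‖x‖)⁻¹
      = ∫⁻ x in ({0}ᶜ : Set (Euc n)),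
          (‖f x‖₊ : ℝ≥0∞) * (‖u x‖₊ : ℝ≥0∞) * (ENNReal.ofReal ‖x‖)⁻¹ := by
        rw [MeasureTheory.restrict_compl_singleton]
    _ ≤ ∫⁻ x in ⋃ j : ℤ, shell n j,
          (‖f x‖₊ : ℝ≥0∞) * (‖u x‖₊ : ℝ≥0∞) * (ENNReal.ofReal ‖x‖)⁻¹ :=
        lintegral_mono_set hcover
    _ ≤ ∑' j : ℤ, ∫⁻ x in shell n j,
          (‖f x‖₊ : ℝ≥0∞) * (‖u x‖₊ : ℝ≥0∞) * (ENNReal.ofReal ‖x‖)⁻¹ :=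
        lintegral_iUnion_le _ _
    _ ≤ ∑' j : ℤ, (sphereSup u) ^ (1/2 : ℝ) *
          (ENNReal.ofReal ((2 : ℝ) ^ (j + 1)) *
            ∫⁻ x in shell n j, (‖f x‖₊ : ℝ≥0∞) ^ 2) ^ (1/2 : ℝ) :=
        ENNReal.tsum_le_tsum fun j => dyadic_shell_bound h1n f u hf hu j
    _ = (sphereSup u) ^ (1/2 : ℝ) * NnormE f := ENNReal.tsum_mul_left
end
end

section
/- Let n ≥ 2 and let u, w : ℝⁿ → ℂ be continuous and h : ℝⁿ → ℝ be continuous on ℝⁿ∖{0}. Then ∫_{ℝⁿ} |u(x)|·|h(x)|·|w(x)| dx ≤ ( ∫_{ℝⁿ} |w(x)|²/|x| dx )^{1/2} · ( sup_{R>0} (1/R²) ∫_{|x|=R} |u|² dσ )^{1/2} · ( ∫₀^{∞} r³ · sup_{|x|=r} |h(x)|² dr )^{1/2}, where dσ is the surface measure on the sphere {|x| = R}. -/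
open MeasureTheory Metric Real Set
open scoped ENNReal

noncomputable section

local notation "dim" => Module.finrank ℝ

lemma lintegral_polar {n : ℕ} (hn : 1 ≤ n) (F : Euc n → ℝ≥0∞)
    (hF : Measurable fun p : Metric.sphere (0 : Euc n) 1 × Set.Ioi (0 : ℝ) =>
      F ((p.2 : ℝ) • (p.1 : Euc n))) :
    ∫⁻ x, F x = ∫⁻ r in Set.Ioi (0 : ℝ), ENNReal.ofReal (r ^ (n - 1)) *
      ∫⁻ ω : Metric.sphere (0 : Euc n) 1, F (r • (ω : Euc n))
        ∂((volume : Measure (Euc n)).toSphere) := by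
  haveI : Nonempty (Fin n) := ⟨⟨0, by omega⟩⟩
  have hdim : dim (Euc n) = n := finrank_euclideanSpace_fin
  have key := (volume : Measure (Euc n)).measurePreserving_homeomorphUnitSphereProd
  set g : Metric.sphere (0 : Euc n) 1 × Set.Ioi (0 : ℝ) → ℝ≥0∞ :=
    fun p => F ((p.2 : ℝ) • (p.1 : Euc n)) with hg
  calc ∫⁻ x, F x = ∫⁻ x in {(0 : Euc n)}ᶜ, F x := by
        rw [restrict_compl_singleton]
    _ = ∫⁻ x : ({(0 : Euc n)}ᶜ : Set (Euc n)), F (x : Euc n) ∂(volume.comap Subtype.val) :=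
        (lintegral_subtype_comap (measurableSet_singleton _).compl _).symm
    _ = ∫⁻ x : ({(0 : Euc n)}ᶜ : Set (Euc n)), g (homeomorphUnitSphereProd (Euc n) x)
          ∂(volume.comap Subtype.val) := by
        refine lintegral_congr fun x => ?_
        have h2 := congrArg Subtype.val
          ((homeomorphUnitSphereProd (Euc n)).symm_apply_apply x)
        rw [homeomorphUnitSphereProd_symm_apply_coe] at h2
        exact (congrArg F h2).symm
    _ = ∫⁻ p, g p ∂((volume : Measure (Euc n)).toSphere.prod
          (.volumeIoiPow (dim (Euc n) - 1))) := key.lintegral_comp hF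
    _ = ∫⁻ r : Set.Ioi (0 : ℝ), ∫⁻ ω, g (ω, r) ∂(volume : Measure (Euc n)).toSphere
          ∂(Measure.volumeIoiPow (dim (Euc n) - 1)) :=
        lintegral_prod_symm g hF.aemeasurable
    _ = ∫⁻ r : Set.Ioi (0 : ℝ), ENNReal.ofReal ((r : ℝ) ^ (n - 1)) *
          ∫⁻ ω, g (ω, r) ∂(volume : Measure (Euc n)).toSphere
          ∂((volume : Measure ℝ).comap Subtype.val) := by
        rw [hdim, Measure.volumeIoiPow, lintegral_withDensity_eq_lintegral_mul]
        · rfl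
        · exact (measurable_subtype_coe.pow_const _).ennreal_ofReal
        · exact hF.lintegral_prod_left'
    _ = _ := lintegral_subtype_comap measurableSet_Ioi
          (fun r : ℝ => ENNReal.ofReal (r ^ (n - 1)) *
            ∫⁻ ω : Metric.sphere (0 : Euc n) 1, F (r • (ω : Euc n))
              ∂((volume : Measure (Euc n)).toSphere))

/-- **Weighted Cauchy–Schwarz estimate (3.21)**:
`∫ |u||h||w| ≤ (∫|w|²/|x|)^{1/2} · (sup_{R>0}(1/R²)∫_{|x|=R}|u|²dσ)^{1/2}
  · (∫₀^∞ r³ sup_{|x|=r}|h|² dr)^{1/2}`. -/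
theorem weighted_cauchy_schwarz
    (n : ℕ) (hn : 2 ≤ n) (u w : Euc n → ℂ) (h : Euc n → ℝ)
    (hu : Continuous u) (hw : Continuous w) (hh : ContinuousOn h {(0 : Euc n)}ᶜ) :
    ∫⁻ x, (‖u x‖₊ : ℝ≥0∞) * ENNReal.ofReal |h x| * (‖w x‖₊ : ℝ≥0∞)
      ≤ (∫⁻ x, (‖w x‖₊ : ℝ≥0∞) ^ 2 * (ENNReal.ofReal ‖x‖)⁻¹) ^ (1/2 : ℝ)
        * (sphereSup u) ^ (1/2 : ℝ)
        * (∫⁻ r in Set.Ioi (0 : ℝ), ENNReal.ofReal (r ^ 3) *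
            ⨆ x ∈ Metric.sphere (0 : Euc n) r, ENNReal.ofReal (h x ^ 2)) ^ (1/2 : ℝ) := by
  haveI : Nonempty (Fin n) := ⟨⟨0, by omega⟩⟩
  set A := ∫⁻ x, (‖w x‖₊ : ℝ≥0∞) ^ 2 * (ENNReal.ofReal ‖x‖)⁻¹ with hA_def
  set S := sphereSup u with hS_def
  set T := ∫⁻ r in Set.Ioi (0 : ℝ), ENNReal.ofReal (r ^ 3) *
      ⨆ x ∈ Metric.sphere (0 : Euc n) r, ENNReal.ofReal (h x ^ 2) with hT_def
  have h0 : ∀ᵐ x : Euc n, x ≠ 0 := by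
    have := (Set.countable_singleton (0 : Euc n)).ae_notMem (volume : Measure (Euc n))
    filter_upwards [this] with x hx
    simpa using hx
  -- Case: h vanishes away from 0
  by_cases hzero : ∀ x : Euc n, x ≠ 0 → h x = 0
  · have hL : ∫⁻ x, (‖u x‖₊ : ℝ≥0∞) * ENNReal.ofReal |h x| * (‖w x‖₊ : ℝ≥0∞) = 0 := by
      rw [← lintegral_zero]
      refine lintegral_congr_ae ?_
      filter_upwards [h0] with x hx
      simp [hzero x hx]
    exact hL.trans_le zero_le
  -- Case: A = 0
  by_cases hA0 : A = 0
  · have hAm : Measurable fun x : Euc n => (‖w x‖₊ : ℝ≥0∞) ^ 2 * (ENNReal.ofReal ‖x‖)⁻¹ :=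
      ((measurable_enorm.comp hw.measurable).pow_const 2).mul (continuous_norm.measurable.ennreal_ofReal.inv)
    have hae := (lintegral_eq_zero_iff hAm).1 hA0
    have hL : ∫⁻ x, (‖u x‖₊ : ℝ≥0∞) * ENNReal.ofReal |h x| * (‖w x‖₊ : ℝ≥0∞) = 0 := by
      rw [← lintegral_zero]
      refine lintegral_congr_ae ?_
      filter_upwards [hae, h0] with x hx hx0
      have hinv : (ENNReal.ofReal ‖x‖)⁻¹ ≠ 0 := by
        simp [ENNReal.inv_eq_zero]
      rcases mul_eq_zero.1 hx with hx' | hx'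
      · have : (‖w x‖₊ : ℝ≥0∞) = 0 := by
          simpa [pow_eq_zero_iff] using hx'
        simp [this]
      · exact absurd hx' hinv
    exact hL.trans_le zero_le
  -- T ≠ 0
  push_neg at hzero
  obtain ⟨x₀, hx₀ne, hhx₀⟩ := hzero
  have hT0 : T ≠ 0 := by
    have hr₀ : 0 < ‖x₀‖ := norm_pos_iff.2 hx₀ne
    set r₀ := ‖x₀‖ with hr₀_def
    set v : Euc n := r₀⁻¹ • x₀ with hv_def
    have hv1 : ‖v‖ = 1 := by
      rw [hv_def, norm_smul, norm_inv, norm_norm, inv_mul_cancel₀ hr₀.ne']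
    have hrv : r₀ • v = x₀ := smul_inv_smul₀ hr₀.ne' x₀
    have hψ : ContinuousAt (fun t : ℝ => (h (t • v)) ^ 2) r₀ := by
      have hcv : Continuous fun t : ℝ => t • v := continuous_id.smul continuous_const
      have hcx : ContinuousAt h (r₀ • v) := by
        rw [hrv]
        exact hh.continuousAt (isOpen_compl_singleton.mem_nhds hx₀ne)
      have : ContinuousAt (fun t : ℝ => h (t • v)) r₀ :=
        ContinuousAt.comp (f := fun t : ℝ => t • v) (x := r₀) hcx hcv.continuousAt
      exact this.pow 2
    set ε := (h x₀) ^ 2 / 2 with hε_def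
    have hεpos : 0 < ε := by positivity
    have hεlt : ε < (h (r₀ • v)) ^ 2 := by
      rw [hrv, hε_def]
      exact half_lt_self (pow_two_pos_of_ne_zero hhx₀)
    have hev : ∀ᶠ t in nhds r₀, ε < (h (t • v)) ^ 2 := hψ.eventually (lt_mem_nhds hεlt)
    obtain ⟨δ, hδpos, hδ⟩ := Metric.eventually_nhds_iff.1 hev
    set δ' := min δ (r₀ / 2) with hδ'_def
    have hδ'pos : 0 < δ' := lt_min hδpos (by positivity)
    have hsub : Set.Ioo (r₀ - δ') (r₀ + δ') ⊆ Set.Ioi (0 : ℝ) := by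
      intro r hr
      have : r₀ / 2 ≤ r₀ - δ' := by
        have := min_le_right δ (r₀ / 2); rw [hδ'_def]; linarith
      have := hr.1
      simp only [Set.mem_Ioi]
      linarith
    have hbound : ∀ r ∈ Set.Ioo (r₀ - δ') (r₀ + δ'),
        ENNReal.ofReal ((r₀ / 2) ^ 3) * ENNReal.ofReal ε ≤
          ENNReal.ofReal (r ^ 3) * ⨆ x ∈ Metric.sphere (0 : Euc n) r, ENNReal.ofReal (h x ^ 2) := by
      intro r hr
      have hrpos : 0 < r := hsub hr
      have hrge : r₀ / 2 ≤ r := by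
        have : r₀ / 2 ≤ r₀ - δ' := by
          have := min_le_right δ (r₀ / 2); rw [hδ'_def]; linarith
        linarith [hr.1]
      have hdist : dist r r₀ < δ := by
        rw [Real.dist_eq, abs_lt]
        have h1 := hr.1; have h2 := hr.2
        have := min_le_left δ (r₀ / 2)
        constructor <;> [linarith; linarith]
      have hεr : ε < (h (r • v)) ^ 2 := hδ hdist
      have hmem : r • v ∈ Metric.sphere (0 : Euc n) r := by
        rw [mem_sphere_zero_iff_norm, norm_smul, hv1, mul_one, Real.norm_eq_abs, abs_of_pos hrpos]
      refine mul_le_mul' (ENNReal.ofReal_le_ofReal ?_) ?_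
      · exact pow_le_pow_left₀ (by positivity) hrge 3
      · exact le_trans (ENNReal.ofReal_le_ofReal hεr.le)
          (le_biSup (fun x => ENNReal.ofReal (h x ^ 2)) hmem)
    have hTlow : ENNReal.ofReal ((r₀ / 2) ^ 3) * ENNReal.ofReal ε *
        volume (Set.Ioo (r₀ - δ') (r₀ + δ')) ≤ T := by
      calc ENNReal.ofReal ((r₀ / 2) ^ 3) * ENNReal.ofReal ε *
            volume (Set.Ioo (r₀ - δ') (r₀ + δ'))
          = ∫⁻ _ in Set.Ioo (r₀ - δ') (r₀ + δ'),
              ENNReal.ofReal ((r₀ / 2) ^ 3) * ENNReal.ofReal ε :=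
            (setLIntegral_const _ _).symm
        _ ≤ ∫⁻ r in Set.Ioo (r₀ - δ') (r₀ + δ'), ENNReal.ofReal (r ^ 3) *
              ⨆ x ∈ Metric.sphere (0 : Euc n) r, ENNReal.ofReal (h x ^ 2) := by
            refine lintegral_mono_ae ?_
            filter_upwards [ae_restrict_mem measurableSet_Ioo] with r hr
            exact hbound r hr
        _ ≤ T := lintegral_mono_set hsub
    intro hTeq
    have hle := hTlow.trans_eq hTeq
    rw [le_zero_iff] at hle
    have h1 : ENNReal.ofReal ((r₀ / 2) ^ 3) ≠ 0 := by
      rw [Ne, ENNReal.ofReal_eq_zero, not_le]; positivity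
    have h2 : ENNReal.ofReal ε ≠ 0 := by
      rw [Ne, ENNReal.ofReal_eq_zero, not_le]; exact hεpos
    have h3 : volume (Set.Ioo (r₀ - δ') (r₀ + δ')) ≠ 0 := by
      rw [Real.volume_Ioo, Ne, ENNReal.ofReal_eq_zero, not_le]; linarith
    exact mul_ne_zero (mul_ne_zero h1 h2) h3 hle
  -- Case: S = ∞
  by_cases hStop : S = ∞
  · have hA12 : A ^ (1/2 : ℝ) ≠ 0 := by
      rw [Ne, ENNReal.rpow_eq_zero_iff]
      rintro (⟨h', -⟩ | ⟨-, h'⟩)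
      · exact hA0 h'
      · norm_num at h'
    have hT12 : T ^ (1/2 : ℝ) ≠ 0 := by
      rw [Ne, ENNReal.rpow_eq_zero_iff]
      rintro (⟨h', -⟩ | ⟨-, h'⟩)
      · exact hT0 h'
      · norm_num at h'
    rw [hStop, ENNReal.top_rpow_of_pos (by norm_num), ENNReal.mul_top hA12,
      ENNReal.top_mul hT12]
    exact le_top
  -- Main case
  have hhm : AEMeasurable h (volume : Measure (Euc n)) := by
    have := hh.aemeasurable (μ := (volume : Measure (Euc n)))
      (measurableSet_singleton (0 : Euc n)).compl
    rwa [restrict_compl_singleton] at this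
  set f : Euc n → ℝ≥0∞ := fun x => (‖w x‖₊ : ℝ≥0∞) * ((ENNReal.ofReal ‖x‖)⁻¹) ^ (1/2 : ℝ)
    with hf_def
  set g : Euc n → ℝ≥0∞ := fun x =>
      (‖u x‖₊ : ℝ≥0∞) * ENNReal.ofReal |h x| * (ENNReal.ofReal ‖x‖) ^ (1/2 : ℝ) with hg_def
  have hfm : AEMeasurable f (volume : Measure (Euc n)) :=
    ((measurable_enorm.comp hw.measurable).mul
      ((continuous_norm.measurable.ennreal_ofReal.inv).pow_const _)).aemeasurable
  have hgm : AEMeasurable g (volume : Measure (Euc n)) :=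
    (((measurable_enorm.comp hu.measurable).aemeasurable.mul
        (ENNReal.measurable_ofReal.comp_aemeasurable
          (measurable_abs.comp_aemeasurable hhm))).mul
      ((continuous_norm.measurable.ennreal_ofReal.pow_const _).aemeasurable))
  have hpq : (2 : ℝ).HolderConjugate 2 := Real.HolderConjugate.two_two
  have CS := ENNReal.lintegral_mul_le_Lp_mul_Lq volume hpq hfm hgm
  have e1 : ∀ y : ℝ≥0∞, y ^ (2 : ℝ) = y ^ 2 := fun y => by
    rw [show (2 : ℝ) = ((2 : ℕ) : ℝ) by norm_num, ENNReal.rpow_natCast]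
  set F : Euc n → ℝ≥0∞ := fun x =>
    (‖u x‖₊ : ℝ≥0∞) ^ 2 * ENNReal.ofReal (h x ^ 2) * ENNReal.ofReal ‖x‖ with hF_def
  set B := ∫⁻ x, F x with hB_def
  have hfA : (∫⁻ x, f x ^ (2 : ℝ)) = A := by
    refine lintegral_congr fun x => ?_
    simp only [hf_def]
    rw [ENNReal.mul_rpow_of_nonneg _ _ (by norm_num : (0:ℝ) ≤ 2), ← ENNReal.rpow_mul, e1]
    norm_num [ENNReal.rpow_one]
  have hgB : (∫⁻ x, g x ^ (2 : ℝ)) = B := by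
    refine lintegral_congr fun x => ?_
    simp only [hg_def, hF_def]
    rw [ENNReal.mul_rpow_of_nonneg _ _ (by norm_num : (0:ℝ) ≤ 2),
      ENNReal.mul_rpow_of_nonneg _ _ (by norm_num : (0:ℝ) ≤ 2),
      ← ENNReal.rpow_mul, e1, e1, ← ENNReal.ofReal_pow (abs_nonneg _), sq_abs]
    norm_num [ENNReal.rpow_one]
  have hLHS : (∫⁻ x, (‖u x‖₊ : ℝ≥0∞) * ENNReal.ofReal |h x| * (‖w x‖₊ : ℝ≥0∞))
      ≤ ∫⁻ x, (f * g) x := by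
    refine lintegral_mono_ae ?_
    filter_upwards [h0] with x hx
    have ha0 : ENNReal.ofReal ‖x‖ ≠ 0 := by
      rw [Ne, ENNReal.ofReal_eq_zero, not_le]
      exact norm_pos_iff.2 hx
    have h1 : ((ENNReal.ofReal ‖x‖)⁻¹) ^ (1/2 : ℝ) * (ENNReal.ofReal ‖x‖) ^ (1/2 : ℝ) = 1 := by
      rw [← ENNReal.mul_rpow_of_nonneg _ _ (by norm_num : (0:ℝ) ≤ 1/2),
        ENNReal.inv_mul_cancel ha0 ENNReal.ofReal_ne_top, ENNReal.one_rpow]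
    have h2 : (f * g) x = ((‖u x‖₊ : ℝ≥0∞) * ENNReal.ofReal |h x| * (‖w x‖₊ : ℝ≥0∞)) *
        (((ENNReal.ofReal ‖x‖)⁻¹) ^ (1/2 : ℝ) * (ENNReal.ofReal ‖x‖) ^ (1/2 : ℝ)) := by
      simp only [Pi.mul_apply, hf_def, hg_def]
      ring
    rw [h2, h1, mul_one]
  -- measurability for polar coordinates
  have hm : Continuous fun p : Metric.sphere (0 : Euc n) 1 × Set.Ioi (0 : ℝ) =>
      (p.2 : ℝ) • (p.1 : Euc n) :=
    (continuous_subtype_val.comp continuous_snd).smul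
      (continuous_subtype_val.comp continuous_fst)
  have hne : ∀ p : Metric.sphere (0 : Euc n) 1 × Set.Ioi (0 : ℝ),
      (p.2 : ℝ) • (p.1 : Euc n) ≠ 0 := fun p =>
    smul_ne_zero (mem_Ioi.1 p.2.2).ne' (ne_of_mem_sphere p.1.2 one_ne_zero)
  have hch : Continuous fun p : Metric.sphere (0 : Euc n) 1 × Set.Ioi (0 : ℝ) =>
      h ((p.2 : ℝ) • (p.1 : Euc n)) :=
    hh.comp_continuous hm fun p => by simpa using hne p
  have hFm : Measurable fun p : Metric.sphere (0 : Euc n) 1 × Set.Ioi (0 : ℝ) =>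
      F ((p.2 : ℝ) • (p.1 : Euc n)) := by
    simp only [hF_def]
    have c1 : Continuous fun p : Metric.sphere (0 : Euc n) 1 × Set.Ioi (0 : ℝ) =>
        (‖u ((p.2 : ℝ) • (p.1 : Euc n))‖₊ : ℝ≥0∞) :=
      ENNReal.continuous_coe.comp (hu.comp hm).nnnorm
    have c2 : Continuous fun p : Metric.sphere (0 : Euc n) 1 × Set.Ioi (0 : ℝ) =>
        ENNReal.ofReal (h ((p.2 : ℝ) • (p.1 : Euc n)) ^ 2) :=
      ENNReal.continuous_ofReal.comp (hch.pow 2)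
    have c3 : Continuous fun p : Metric.sphere (0 : Euc n) 1 × Set.Ioi (0 : ℝ) =>
        ENNReal.ofReal ‖(p.2 : ℝ) • (p.1 : Euc n)‖ :=
      ENNReal.continuous_ofReal.comp hm.norm
    exact ((c1.measurable.pow_const 2).mul c2.measurable).mul c3.measurable
  have hpolar : (∫⁻ x, F x) = ∫⁻ r in Set.Ioi (0 : ℝ), ENNReal.ofReal (r ^ (n - 1)) *
      ∫⁻ ω : Metric.sphere (0 : Euc n) 1, F (r • (ω : Euc n))
        ∂((volume : Measure (Euc n)).toSphere) :=
    lintegral_polar (by omega) F hFm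
  have hstep : ∀ r ∈ Set.Ioi (0 : ℝ), ENNReal.ofReal (r ^ (n - 1)) *
      (∫⁻ ω : Metric.sphere (0 : Euc n) 1, F (r • (ω : Euc n))
        ∂((volume : Measure (Euc n)).toSphere)) ≤
      S * (ENNReal.ofReal (r ^ 3) *
        ⨆ x ∈ Metric.sphere (0 : Euc n) r, ENNReal.ofReal (h x ^ 2)) := by
    intro r hr
    have hrpos : (0 : ℝ) < r := hr
    set M := ⨆ x ∈ Metric.sphere (0 : Euc n) r, ENNReal.ofReal (h x ^ 2) with hM_def
    have hptw : ∀ ω : Metric.sphere (0 : Euc n) 1,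
        F (r • (ω : Euc n)) ≤ (M * ENNReal.ofReal r) *
          (‖u (r • (ω : Euc n))‖₊ : ℝ≥0∞) ^ 2 := by
      intro ω
      have hωn : ‖(ω : Euc n)‖ = 1 := mem_sphere_zero_iff_norm.1 ω.2
      have hnorm : ‖r • (ω : Euc n)‖ = r := by
        rw [norm_smul, hωn, mul_one, Real.norm_eq_abs, abs_of_pos hrpos]
      have hmem : r • (ω : Euc n) ∈ Metric.sphere (0 : Euc n) r :=
        mem_sphere_zero_iff_norm.2 hnorm
      have hsup : ENNReal.ofReal (h (r • (ω : Euc n)) ^ 2) ≤ M :=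
        le_biSup (fun x => ENNReal.ofReal (h x ^ 2)) hmem
      calc F (r • (ω : Euc n))
          = (‖u (r • (ω : Euc n))‖₊ : ℝ≥0∞) ^ 2 *
              ENNReal.ofReal (h (r • (ω : Euc n)) ^ 2) * ENNReal.ofReal r := by
            simp only [hF_def]; rw [hnorm]
        _ ≤ (‖u (r • (ω : Euc n))‖₊ : ℝ≥0∞) ^ 2 * M * ENNReal.ofReal r := by gcongr
        _ = (M * ENNReal.ofReal r) * (‖u (r • (ω : Euc n))‖₊ : ℝ≥0∞) ^ 2 := by ring
    have hum : Measurable fun ω : Metric.sphere (0 : Euc n) 1 =>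
        (‖u (r • (ω : Euc n))‖₊ : ℝ≥0∞) ^ 2 :=
      ((ENNReal.continuous_coe.comp
        ((hu.comp (continuous_subtype_val.const_smul r)).nnnorm)).measurable).pow_const 2
    have hIb : (∫⁻ ω : Metric.sphere (0 : Euc n) 1, F (r • (ω : Euc n))
        ∂((volume : Measure (Euc n)).toSphere)) ≤
        (M * ENNReal.ofReal r) * ∫⁻ ω : Metric.sphere (0 : Euc n) 1,
          (‖u (r • (ω : Euc n))‖₊ : ℝ≥0∞) ^ 2 ∂((volume : Measure (Euc n)).toSphere) := by
      rw [← lintegral_const_mul _ hum]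
      exact lintegral_mono hptw
    have hne2 : ENNReal.ofReal (r ^ 2) ≠ 0 := by
      rw [Ne, ENNReal.ofReal_eq_zero, not_le]; positivity
    have hXS : sphereLIntegral n r (fun x => (‖u x‖₊ : ℝ≥0∞) ^ 2) ≤
        ENNReal.ofReal (r ^ 2) * S := by
      have hle : (ENNReal.ofReal (r ^ 2))⁻¹ *
          sphereLIntegral n r (fun x => (‖u x‖₊ : ℝ≥0∞) ^ 2) ≤ S := by
        rw [hS_def, sphereSup]
        exact le_iSup₂ (f := fun R (_ : 0 < R) => (ENNReal.ofReal (R ^ 2))⁻¹ *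
          sphereLIntegral n R fun x => (‖u x‖₊ : ℝ≥0∞) ^ 2) r hrpos
      calc sphereLIntegral n r (fun x => (‖u x‖₊ : ℝ≥0∞) ^ 2)
          = ENNReal.ofReal (r ^ 2) * ((ENNReal.ofReal (r ^ 2))⁻¹ *
              sphereLIntegral n r fun x => (‖u x‖₊ : ℝ≥0∞) ^ 2) := by
            rw [← mul_assoc, ENNReal.mul_inv_cancel hne2 ENNReal.ofReal_ne_top, one_mul]
        _ ≤ _ := mul_le_mul_right hle _
    calc ENNReal.ofReal (r ^ (n - 1)) * ∫⁻ ω : Metric.sphere (0 : Euc n) 1,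
          F (r • (ω : Euc n)) ∂((volume : Measure (Euc n)).toSphere)
        ≤ ENNReal.ofReal (r ^ (n - 1)) * ((M * ENNReal.ofReal r) *
            ∫⁻ ω : Metric.sphere (0 : Euc n) 1, (‖u (r • (ω : Euc n))‖₊ : ℝ≥0∞) ^ 2
              ∂((volume : Measure (Euc n)).toSphere)) := mul_le_mul_right hIb _
      _ = (M * ENNReal.ofReal r) *
            sphereLIntegral n r (fun x => (‖u x‖₊ : ℝ≥0∞) ^ 2) := by
          rw [sphereLIntegral]; ring
      _ ≤ (M * ENNReal.ofReal r) * (ENNReal.ofReal (r ^ 2) * S) := mul_le_mul_right hXS _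
      _ = S * (ENNReal.ofReal r * ENNReal.ofReal (r ^ 2) * M) := by ring
      _ = S * (ENNReal.ofReal (r ^ 3) * M) := by
          rw [← ENNReal.ofReal_mul hrpos.le, show r * r ^ 2 = r ^ 3 by ring]
  have hB_le : B ≤ S * T := by
    rw [hB_def, hpolar]
    calc (∫⁻ r in Set.Ioi (0 : ℝ), ENNReal.ofReal (r ^ (n - 1)) *
          ∫⁻ ω : Metric.sphere (0 : Euc n) 1, F (r • (ω : Euc n))
            ∂((volume : Measure (Euc n)).toSphere))
        ≤ ∫⁻ r in Set.Ioi (0 : ℝ), S * (ENNReal.ofReal (r ^ 3) *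
            ⨆ x ∈ Metric.sphere (0 : Euc n) r, ENNReal.ofReal (h x ^ 2)) := by
          refine lintegral_mono_ae ?_
          filter_upwards [ae_restrict_mem measurableSet_Ioi] with r hr
          exact hstep r hr
      _ = S * T := by
          rw [lintegral_const_mul' S _ hStop, ← hT_def]
  calc (∫⁻ x, (‖u x‖₊ : ℝ≥0∞) * ENNReal.ofReal |h x| * (‖w x‖₊ : ℝ≥0∞))
      ≤ ∫⁻ x, (f * g) x := hLHS
    _ ≤ (∫⁻ x, f x ^ (2 : ℝ)) ^ (1/2 : ℝ) * (∫⁻ x, g x ^ (2 : ℝ)) ^ (1/2 : ℝ) := by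
        simpa using CS
    _ = A ^ (1/2 : ℝ) * B ^ (1/2 : ℝ) := by rw [hfA, hgB]
    _ ≤ A ^ (1/2 : ℝ) * (S * T) ^ (1/2 : ℝ) :=
        mul_le_mul_right (ENNReal.rpow_le_rpow hB_le (by norm_num)) _
    _ = A ^ (1/2 : ℝ) * S ^ (1/2 : ℝ) * T ^ (1/2 : ℝ) := by
        rw [ENNReal.mul_rpow_of_nonneg _ _ (by norm_num : (0:ℝ) ≤ 1/2), mul_assoc]
end
end
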